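/- There exists a partial order on ℕ whose coded set is co-c.e. and which is not isomorphic to any partial order on ℕ whose coded set is computable. -/

import Mathlib

namespace CEOrders

/-- The coded set of a binary relation on ℕ, via the pairing function `Nat.pair`. -/
def codedSet (R : ℕ → ℕ → Prop) : Set ℕ := {n | R n.unpair.1 n.unpair.2}

/-- A set of naturals is c.e. (computably enumerable). -/
def SetCE (A : Set ℕ) : Prop := REPred (· ∈ A)

/-- A set of naturals is co-c.e. -/
def SetCoCE (A : Set ℕ) : Prop := REPred (· ∉ A)

/-- A set of naturals is computable. -/
def SetComputable (A : Set ℕ) : Prop := ComputablePred (· ∈ A)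

/-- A partial order on ℕ: reflexive, antisymmetric, transitive. -/
def PartialOrderRel (R : ℕ → ℕ → Prop) : Prop :=
  (∀ a, R a a) ∧ (∀ a b, R a b → R b a → a = b) ∧ (∀ a b c, R a b → R b c → R a c)

/-- A preorder on ℕ: reflexive, transitive. -/
def PreorderRel (R : ℕ → ℕ → Prop) : Prop :=
  (∀ a, R a a) ∧ (∀ a b c, R a b → R b c → R a c)

/-- A (simple, undirected) graph on ℕ: irreflexive, symmetric. -/
def GraphRel (R : ℕ → ℕ → Prop) : Prop :=
  (∀ a, ¬ R a a) ∧ (∀ a b, R a b → R b a)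

/-- Isomorphism of binary relations on ℕ. -/
def Isomorphic (R Q : ℕ → ℕ → Prop) : Prop :=
  ∃ f : ℕ → ℕ, Function.Bijective f ∧ ∀ a b, R a b ↔ Q (f a) (f b)

/-- A chain for a relation: any two elements comparable. -/
def ChainFor (R : ℕ → ℕ → Prop) (C : Set ℕ) : Prop :=
  ∀ a ∈ C, ∀ b ∈ C, R a b ∨ R b a

/-- An antichain for a relation: any two distinct elements incomparable. -/
def AntichainFor (R : ℕ → ℕ → Prop) (C : Set ℕ) : Prop :=
  ∀ a ∈ C, ∀ b ∈ C, a ≠ b → ¬ R a b ∧ ¬ R b a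

/-- Partial functions computable relative to an oracle `g`. -/
inductive RecursiveIn (g : ℕ →. ℕ) : (ℕ →. ℕ) → Prop
  | zero : RecursiveIn g (pure 0)
  | succ : RecursiveIn g Nat.succ
  | left : RecursiveIn g ↑fun n : ℕ => n.unpair.1
  | right : RecursiveIn g ↑fun n : ℕ => n.unpair.2
  | oracle : RecursiveIn g g
  | pair {f h} : RecursiveIn g f → RecursiveIn g h →
      RecursiveIn g fun n => Nat.pair <$> f n <*> h n
  | comp {f h} : RecursiveIn g f → RecursiveIn g h →
      RecursiveIn g fun n => h n >>= f
  | prec {f h} : RecursiveIn g f → RecursiveIn g h →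
      RecursiveIn g (Nat.unpaired fun a n =>
        n.rec (f a) fun y IH => do let i ← IH; h (Nat.pair a (Nat.pair y i)))
  | rfind {f} : RecursiveIn g f →
      RecursiveIn g fun a => Nat.rfind fun n => (fun m => m = 0) <$> f (Nat.pair a n)

open Classical in
/-- The characteristic (partial) function of a set of naturals. -/
noncomputable def charFun (A : Set ℕ) : ℕ →. ℕ :=
  fun n => Part.some (if n ∈ A then 1 else 0)

/-- Turing reducibility between sets of naturals. -/
def TuringLE (A B : Set ℕ) : Prop := RecursiveIn (charFun B) (charFun A)

/-- Turing equivalence between sets of naturals. -/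
def TuringEquiv (A B : Set ℕ) : Prop := TuringLE A B ∧ TuringLE B A

/-- The halting set ∅'. -/
def HaltingSet : Set ℕ :=
  {n | ((Denumerable.ofNat Nat.Partrec.Code n).eval n).Dom}

/-- A relation on ℕ is automorphically nontrivial. -/
def AutNontrivial (R : ℕ → ℕ → Prop) : Prop :=
  ¬ ∃ F : Finset ℕ, ∀ f : ℕ → ℕ, Function.Bijective f → (∀ x ∈ F, f x = x) →
      ∀ a b, R a b ↔ R (f a) (f b)

open Nat.Partrec (Code)
open Nat.Partrec.Code

/-! ### Auxiliary construction -/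

/-- A fixed non-computable, c.e. set: codes (as naturals) of programs halting on input 17. -/
def K0 : ℕ → Prop := fun n => (((Denumerable.ofNat Nat.Partrec.Code n).eval 17)).Dom

theorem K0_re : REPred K0 :=
  (ComputablePred.halting_problem_re 17).comp (Computable.ofNat _)

theorem K0_not_computable : ¬ ComputablePred K0 := by
  intro h
  apply ComputablePred.halting_problem 17
  obtain ⟨f, hf, hp⟩ := ComputablePred.computable_iff.1 h
  refine ComputablePred.computable_iff.2 ⟨fun c => f (Encodable.encode c),
    hf.comp Computable.encode, ?_⟩
  funext c
  have h1 : K0 (Encodable.encode c) = (f (Encodable.encode c) : Prop) := congrFun hp _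
  have h2 : K0 (Encodable.encode c) = (c.eval 17).Dom := by
    unfold K0; rw [Denumerable.ofNat_encode]
  rw [← h2, h1]

/-- Boolean version of the pattern edge relation for the `n`-th "crown with pendant". -/
def DstB (n i j : ℕ) : Bool :=
  (decide (i < n+3) && (decide (j = (n+3) + i) || decide (j = (n+3) + (i+1) % (n+3)))) ||
    (decide (i = 2*(n+3)) && decide (j = n+3))

/-- The pattern edge relation. -/
def Dst (n i j : ℕ) : Prop := DstB n i j = true

theorem Dst_iff {n i j : ℕ} : Dst n i j ↔
    ((i < n+3 ∧ (j = (n+3) + i ∨ j = (n+3) + (i+1) % (n+3))) ∨ (i = 2*(n+3) ∧ j = n+3)) := by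
  simp [Dst, DstB, Bool.or_eq_true, Bool.and_eq_true, decide_eq_true_iff]

theorem Dst_bounds {n i j : ℕ} (h : Dst n i j) :
    (n+3) ≤ j ∧ j < 2*(n+3) ∧ (i < n+3 ∨ i = 2*(n+3)) := by
  have hm : (i+1) % (n+3) < n+3 := Nat.mod_lt _ (by omega)
  rcases Dst_iff.1 h with ⟨hi, hj | hj⟩ | ⟨hi, hj⟩ <;> omega

theorem Dst_asymm {n i j : ℕ} (h1 : Dst n i j) (h2 : Dst n j i) : False := by
  have b1 := Dst_bounds h1
  have b2 := Dst_bounds h2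
  omega

/-- The co-c.e. partial order. -/
def Pord (x y : ℕ) : Prop :=
  x = y ∨ (x.unpair.1 = y.unpair.1 ∧ Dst x.unpair.1 x.unpair.2 y.unpair.2 ∧
    (x.unpair.2 = 2*(x.unpair.1+3) → ¬ K0 x.unpair.1))

theorem Pord_partialOrder : PartialOrderRel Pord := by
  refine ⟨fun a => Or.inl rfl, ?_, ?_⟩
  · rintro a b (rfl | ⟨hb, hd, _⟩) h2
    · rfl
    · rcases h2 with rfl | ⟨hb', hd', _⟩
      · rfl
      · rw [hb] at hd
        exact absurd hd' (fun h => Dst_asymm hd h)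
  · rintro a b c (rfl | ⟨hb, hd, hp⟩) h2
    · exact h2
    · rcases h2 with rfl | ⟨hb', hd', _⟩
      · exact Or.inr ⟨hb, hd, hp⟩
      · exfalso
        have u1 := Dst_bounds hd
        rw [hb] at u1
        have u2 := Dst_bounds hd'
        omega

/-- Length of the pattern tuple for parameter `n`. -/
def LL (n : ℕ) : ℕ := 2*(n+3)+1

/-- `v` is a pattern witness for `n` inside the binary relation `R`. -/
def GoodT (R : ℕ → ℕ → Prop) (n : ℕ) (v : ℕ → ℕ) : Prop :=
  ∀ i, i < LL n → ∀ j, j < LL n → (R (v i) (v j) ↔ (i = j ∨ Dst n i j))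

theorem good_of_not_K0 {n : ℕ} (hn : ¬ K0 n) : GoodT Pord n (fun i => Nat.pair n i) := by
  intro i hi j hj
  unfold Pord
  simp only [Nat.unpair_pair]
  constructor
  · rintro (h | ⟨-, hd, -⟩)
    · left
      have := congrArg (fun t => t.unpair.2) h
      simpa using this
    · exact Or.inr hd
  · rintro (rfl | hd)
    · exact Or.inl rfl
    · exact Or.inr ⟨by trivial, hd, fun _ => hn⟩

theorem mod_succ_eq (a m : ℕ) (ha : a < m) : (a+1) % m = if a+1 = m then 0 else a+1 := by
  split
  · next h => rw [h, Nat.mod_self]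
  · next h => exact Nat.mod_eq_of_lt (by omega)

theorem mod_succ_inj {a b M : ℕ} (ha : a < M) (hb : b < M) (h : (a+1)%M = (b+1)%M) : a = b := by
  rw [mod_succ_eq a M ha, mod_succ_eq b M hb] at h
  split at h <;> split at h <;> omega

/-- The cyclic rigidity lemma. -/
theorem cyc_lemma {k k' : ℕ} (hk : 3 ≤ k) (hk' : 3 ≤ k') (σ : ℕ → ℕ)
    (hb : ∀ s, s < k → σ s < k')
    (hinj : ∀ s, s < k → ∀ t, t < k → σ s = σ t → s = t)
    (hadj : ∀ s, s < k → σ ((s+1)%k) = (σ s + 1) % k' ∨ σ s = (σ ((s+1)%k) + 1) % k') :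
    k = k' := by
  haveI : NeZero k' := ⟨by omega⟩
  -- k ≤ k' by injectivity
  have hle : k ≤ k' := by
    have := Finset.card_le_card_of_injOn σ
      (fun a ha => by
        simp only [Finset.coe_range, Set.mem_Iio] at *
        exact hb a ha)
      (fun a ha b hb' hab => by
        simp only [Finset.coe_range, Set.mem_Iio] at ha hb'
        exact hinj a ha b hb' hab)
      (s := Finset.range k) (t := Finset.range k')
    simpa using this
  set g : ℕ → ZMod k' := fun s => (σ s : ZMod k') with hg
  have ginj : ∀ s, s < k → ∀ t, t < k → g s = g t → s = t := by
    intro s hs t ht h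
    apply hinj s hs t ht
    have := congrArg ZMod.val h
    rwa [hg, ZMod.val_natCast_of_lt (hb s hs), ZMod.val_natCast_of_lt (hb t ht)] at this
  have gadj : ∀ s, s < k → g ((s+1)%k) = g s + 1 ∨ g s = g ((s+1)%k) + 1 := by
    intro s hs
    rcases hadj s hs with h | h
    · left
      have := congrArg (fun a : ℕ => (a : ZMod k')) h
      simpa [hg, ZMod.natCast_mod, Nat.cast_add] using this
    · right
      have := congrArg (fun a : ℕ => (a : ZMod k')) h
      simpa [hg, ZMod.natCast_mod, Nat.cast_add] using this
  -- no immediate backtracking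
  have nostep : ∀ s, s < k → ¬ g ((s+2)%k) = g s := by
    intro s hs h
    have h2 : (s+2)%k < k := Nat.mod_lt _ (by omega)
    have := ginj _ h2 _ hs h
    have hcase : s + 2 < k ∨ s + 2 = k ∨ s + 2 = k + 1 := by omega
    rcases hcase with h3 | h3 | h3
    · rw [Nat.mod_eq_of_lt h3] at this; omega
    · rw [h3, Nat.mod_self] at this; omega
    · rw [h3, Nat.add_mod_left, Nat.mod_eq_of_lt (show 1 < k by omega)] at this; omega
  -- constant direction
  have key : ∀ (e : ZMod k'), (e = 1 ∨ e = -1) → g (1%k) = g 0 + e →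
      (∀ s, s < k → g ((s+1)%k) = g s + e) := by
    intro e he hbase
    intro s
    induction s with
    | zero => intro _; simpa using hbase
    | succ s ih =>
      intro hs1
      have hs : s < k := by omega
      have ihs := ih hs
      have hmod : (s+1) % k = s+1 := Nat.mod_eq_of_lt hs1
      rcases gadj (s+1) hs1 with h | h
      · -- g ((s+2)%k) = g (s+1) + 1
        rcases he with rfl | rfl
        · rw [show s+1+1 = s+2 by ring] at h
          exact h
        · exfalso
          apply nostep s hs
          rw [show s+1+1 = s+2 by ring] at h
          rw [h, ← hmod, ihs]; ring
      · -- g (s+1) = g ((s+2)%k) + 1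
        rcases he with rfl | rfl
        · exfalso
          apply nostep s hs
          rw [show s+1+1 = s+2 by ring] at h
          have h5 : g ((s+2)%k) = g (s+1) - 1 := by rw [h]; ring
          rw [h5, ← hmod, ihs]; ring
        · rw [show s+1+1 = s+2 by ring] at h
          rw [h]; ring
  -- get base direction
  have h0k : (0:ℕ) < k := by omega
  obtain ⟨e, he, hbase⟩ : ∃ e : ZMod k', (e = 1 ∨ e = -1) ∧ g (1%k) = g 0 + e := by
    rcases gadj 0 h0k with h | h
    · exact ⟨1, Or.inl rfl, by simpa using h⟩
    · refine ⟨-1, Or.inr rfl, ?_⟩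
      have : g (1%k) = g 0 - 1 := by
        have := h
        simp only [Nat.zero_add] at this
        rw [this]; ring
      rw [this]; ring
  have hall := key e he hbase
  -- iterate
  have iter : ∀ s, s ≤ k → g (s%k) = g 0 + (s:ZMod k') * e := by
    intro s
    induction s with
    | zero => intro _; simp [Nat.zero_mod]
    | succ s ih =>
      intro hs1
      have hs : s ≤ k := by omega
      have ihs := ih hs
      have hsk : s % k < k := Nat.mod_lt _ (by omega)
      have := hall (s % k) hsk
      have hmm : (s % k + 1) % k = (s+1) % k := by
        conv_rhs => rw [Nat.add_mod]
        rw [Nat.mod_eq_of_lt (show 1 < k by omega)]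
      rw [hmm, ihs] at this
      rw [this]
      push_cast
      ring
  have hfin := iter k (le_refl k)
  rw [Nat.mod_self] at hfin
  have hke : (k : ZMod k') * e = 0 := left_eq_add.mp hfin
  have hz : (k : ZMod k') = 0 := by
    rcases he with rfl | rfl
    · simpa using hke
    · have := congrArg (fun x => -x) hke
      simpa using this
  have hdvd : k' ∣ k := (ZMod.natCast_eq_zero_iff k k').mp hz
  have := Nat.le_of_dvd (by omega) hdvd
  omega


theorem good_imp {n : ℕ} {v : ℕ → ℕ} (H : GoodT Pord n v) : ¬ K0 n := by
  unfold GoodT LL at H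
  set B : ℕ → ℕ := fun i => (v i).unpair.1 with hB
  set W : ℕ → ℕ := fun i => (v i).unpair.2 with hW
  -- injectivity
  have inj : ∀ i, i < 2*(n+3)+1 → ∀ j, j < 2*(n+3)+1 → v i = v j → i = j := by
    intro i hi j hj he
    by_contra hne
    have h1 := (H i hi j hj).1 (Or.inl he)
    have h2 := (H j hj i hi).1 (Or.inl he.symm)
    rcases h1 with h1 | h1
    · exact hne h1
    rcases h2 with h2 | h2
    · exact hne h2.symm
    exact Dst_asymm h1 h2
  have weq : ∀ i, i < 2*(n+3)+1 → ∀ j, j < 2*(n+3)+1 → B i = B j → W i = W j → i = j := by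
    intro i hi j hj hb hw
    apply inj i hi j hj
    rw [← Nat.pair_unpair (v i), ← Nat.pair_unpair (v j)]
    rw [show (v i).unpair.1 = B i from rfl, show (v j).unpair.1 = B j from rfl,
      show (v i).unpair.2 = W i from rfl, show (v j).unpair.2 = W j from rfl, hb, hw]
  have strict : ∀ i, i < 2*(n+3)+1 → ∀ j, j < 2*(n+3)+1 → Dst n i j →
      (B i = B j ∧ Dst (B i) (W i) (W j) ∧ (W i = 2*(B i + 3) → ¬ K0 (B i))) := by
    intro i hi j hj hD
    have hp := (H i hi j hj).2 (Or.inr hD)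
    rcases hp with he | hs
    · exfalso
      have := inj i hi j hj he
      subst this
      have hb := Dst_bounds hD
      omega
    · exact hs
  -- edges
  have e1 : ∀ s, s < n+3 → Dst n s ((n+3)+s) := fun s hs => Dst_iff.2 (Or.inl ⟨hs, Or.inl rfl⟩)
  have e2 : ∀ s, s < n+3 → Dst n s ((n+3)+(s+1)%(n+3)) :=
    fun s hs => Dst_iff.2 (Or.inl ⟨hs, Or.inr rfl⟩)
  have ep : Dst n (2*(n+3)) (n+3) := Dst_iff.2 (Or.inr ⟨rfl, rfl⟩)
  have e0 : Dst n 0 (n+3) := by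
    have := e1 0 (by omega); simpa using this
  have ek1 : Dst n (n+2) (n+3) := by
    have := e2 (n+2) (by omega)
    rw [show (n+2)+1 = n+3 from rfl, Nat.mod_self] at this
    simpa using this
  have hmlt : ∀ s, (s+1)%(n+3) < n+3 := fun s => Nat.mod_lt _ (by omega)
  have hsne : ∀ s, s < n+3 → s ≠ (s+1)%(n+3) := by
    intro s hs
    rw [mod_succ_eq s (n+3) hs]
    split <;> omega
  -- top blocks constant
  have hBtop : ∀ s, s < n+3 → B ((n+3)+s) = B (n+3) := by
    intro s
    induction s with
    | zero => intro _; rw [Nat.add_zero]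
    | succ s ih =>
      intro hs1
      have hs : s < n+3 := by omega
      have h1 := strict s (by omega) ((n+3)+s) (by omega) (e1 s hs)
      have h2 := strict s (by omega) ((n+3)+(s+1)%(n+3)) (by have := hmlt s; omega) (e2 s hs)
      have hmod : (s+1)%(n+3) = s+1 := Nat.mod_eq_of_lt hs1
      rw [hmod] at h2
      rw [← h2.1, h1.1, ih hs]
  have hBbot : ∀ s, s < n+3 → B s = B (n+3) := by
    intro s hs
    have h1 := strict s (by omega) ((n+3)+s) (by omega) (e1 s hs)
    rw [h1.1, hBtop s hs]
  have hBpend : B (2*(n+3)) = B (n+3) := by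
    have h1 := strict (2*(n+3)) (by omega) (n+3) (by omega) ep
    exact h1.1
  set m := B (n+3) with hm
  -- bottoms have small second component
  have hWb : ∀ s, s < n+3 → W s < m+3 := by
    intro s hs
    have h1 := strict s (by omega) ((n+3)+s) (by omega) (e1 s hs)
    have hBs : B s = m := hBbot s hs
    rw [hBs] at h1
    rcases Dst_iff.1 h1.2.1 with ⟨h, _⟩ | ⟨hp2, hj2⟩
    · exact h
    · exfalso
      have h2 := strict s (by omega) ((n+3)+(s+1)%(n+3)) (by have := hmlt s; omega) (e2 s hs)
      rw [hBs] at h2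
      rcases Dst_iff.1 h2.2.1 with ⟨h, _⟩ | ⟨hp3, hj3⟩
      · omega
      · have hb1 : B ((n+3)+s) = m := by rw [← h1.1]
        have hb2 : B ((n+3)+(s+1)%(n+3)) = m := by rw [← h2.1]
        have := weq ((n+3)+s) (by omega) ((n+3)+(s+1)%(n+3)) (by have := hmlt s; omega)
          (by rw [hb1, hb2]) (by rw [hj2, hj3])
        have hne := hsne s hs
        omega
  -- tops
  have hWt : ∀ s, s < n+3 →
      (W ((n+3)+s) = (m+3) + W s ∨ W ((n+3)+s) = (m+3) + (W s + 1) % (m+3)) := by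
    intro s hs
    have h1 := strict s (by omega) ((n+3)+s) (by omega) (e1 s hs)
    rw [hBbot s hs] at h1
    rcases Dst_iff.1 h1.2.1 with ⟨_, hj⟩ | ⟨hp2, _⟩
    · exact hj
    · have := hWb s hs; omega
  have hWt2 : ∀ s, s < n+3 →
      (W ((n+3)+(s+1)%(n+3)) = (m+3) + W s ∨
        W ((n+3)+(s+1)%(n+3)) = (m+3) + (W s + 1) % (m+3)) := by
    intro s hs
    have h1 := strict s (by omega) ((n+3)+(s+1)%(n+3)) (by have := hmlt s; omega) (e2 s hs)
    rw [hBbot s hs] at h1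
    rcases Dst_iff.1 h1.2.1 with ⟨_, hj⟩ | ⟨hp2, _⟩
    · exact hj
    · have := hWb s hs; omega
  have hBtop' : ∀ s, s < n+3 → B ((n+3)+s) = m := fun s hs => hBtop s hs
  have hmm : ∀ s, (W s + 1) % (m+3) < m+3 := fun s => Nat.mod_lt _ (by omega)
  have htne : ∀ s, s < n+3 → W ((n+3)+s) ≠ W ((n+3)+(s+1)%(n+3)) := by
    intro s hs hc
    have := weq ((n+3)+s) (by omega) ((n+3)+(s+1)%(n+3)) (by have := hmlt s; omega)
      (by rw [hBtop' s hs, hBtop' _ (hmlt s)]) hc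
    have hne := hsne s hs
    omega
  have hmodne : ∀ s, s < n+3 → (W s + 1) % (m+3) ≠ W s := by
    intro s hs hc
    have := hWb s hs
    rw [mod_succ_eq (W s) (m+3) this] at hc
    split at hc <;> omega
  -- pendant detection at top (n+3)
  have P1 := strict 0 (by omega) (n+3) (by omega) e0
  rw [hBbot 0 (by omega)] at P1
  have P2 := strict (n+2) (by omega) (n+3) (by omega) ek1
  rw [hBbot (n+2) (by omega)] at P2
  have P3 := strict (2*(n+3)) (by omega) (n+3) (by omega) ep
  rw [hBpend] at P3
  have hKm : ¬ K0 m := by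
    rcases Dst_iff.1 P3.2.1 with ⟨q3, r3⟩ | ⟨q3, r3⟩
    swap
    · exact P3.2.2 q3
    rcases Dst_iff.1 P1.2.1 with ⟨q1, r1⟩ | ⟨q1, r1⟩
    swap
    · exact P1.2.2 q1
    rcases Dst_iff.1 P2.2.1 with ⟨q2, r2⟩ | ⟨q2, r2⟩
    swap
    · exact P2.2.2 q2
    -- all three are "bottom" style: contradiction
    exfalso
    have d12 : W 0 ≠ W (n+2) := by
      intro hc
      have := weq 0 (by omega) (n+2) (by omega) (by rw [hBbot 0 (by omega), hBbot (n+2) (by omega)]) hc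
      omega
    have d13 : W 0 ≠ W (2*(n+3)) := by
      intro hc
      have := weq 0 (by omega) (2*(n+3)) (by omega) (by rw [hBbot 0 (by omega), hBpend]) hc
      omega
    have d23 : W (n+2) ≠ W (2*(n+3)) := by
      intro hc
      have := weq (n+2) (by omega) (2*(n+3)) (by omega) (by rw [hBbot (n+2) (by omega), hBpend]) hc
      omega
    -- each of the three second components is a "lower neighbour" of T := W (n+3)
    rcases r1 with r1 | r1 <;> rcases r2 with r2 | r2 <;> rcases r3 with r3 | r3
    · omega
    · omega
    · omega
    · exact d23 (mod_succ_inj q2 q3 (by omega))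
    · omega
    · exact d13 (mod_succ_inj q1 q3 (by omega))
    · exact d12 (mod_succ_inj q1 q2 (by omega))
    · exact d12 (mod_succ_inj q1 q2 (by omega))
  -- now cyclic rigidity gives m = n
  have hkk : (n+3 : ℕ) = m+3 := by
    apply cyc_lemma (by omega) (by omega) (fun s => W ((n+3)+s) - (m+3))
    · intro s hs
      have := hWb s hs
      have := hmm s
      rcases hWt s hs with h | h <;> omega
    · intro s hs t ht h
      have h1 : W ((n+3)+s) = W ((n+3)+t) := by
        have a1 := hWb s hs
        have a2 := hWb t ht
        have b1 := hmm s
        have b2 := hmm t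
        rcases hWt s hs with u1 | u1 <;> rcases hWt t ht with u2 | u2 <;> omega
      have := weq ((n+3)+s) (by omega) ((n+3)+t) (by omega)
        (by rw [hBtop' s hs, hBtop' t ht]) h1
      omega
    · intro s hs
      have hXY := htne s hs
      have hne2 := hmodne s hs
      rcases hWt s hs with u1 | u1 <;> rcases hWt2 s hs with u2 | u2
      · omega
      · left
        rw [u1, u2, Nat.add_sub_cancel_left, Nat.add_sub_cancel_left]
      · right
        rw [u1, u2, Nat.add_sub_cancel_left, Nat.add_sub_cancel_left]
      · omega
  have hmn : m = n := by omega
  rw [← hmn]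
  exact hKm



/-! ### Computability layer -/

/-- Bounded universal quantification as a boolean, via `Nat.rec`. -/
def NAll (p : ℕ → Bool) : ℕ → Bool := fun L => Nat.rec true (fun y IH => IH && p y) L

theorem NAll_iff {p : ℕ → Bool} {L : ℕ} : NAll p L = true ↔ ∀ i, i < L → p i = true := by
  induction L with
  | zero => simp [NAll]
  | succ L ih =>
    have h0 : NAll p (L+1) = (NAll p L && p L) := rfl
    rw [h0, Bool.and_eq_true, ih]
    constructor
    · rintro ⟨h1, h2⟩ i hi
      rcases Nat.lt_succ_iff_lt_or_eq.1 hi with h | rfl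
      · exact h1 i h
      · exact h2
    · intro h
      exact ⟨fun i hi => h i (by omega), h L (by omega)⟩

theorem computable_NAll {α : Type} [Primcodable α] {F : α → ℕ} {G : α → ℕ → Bool}
    (hF : Computable F) (hG : Computable₂ G) : Computable fun x => NAll (G x) (F x) := by
  have h1 : Computable fun q : α × (ℕ × Bool) => q.2.2 :=
    Computable.snd.comp Computable.snd
  have h2 : Computable fun q : α × (ℕ × Bool) => G q.1 q.2.1 :=
    hG.comp Computable.fst (Computable.fst.comp Computable.snd)
  have h3 := Computable.cond h1 h2 (Computable.const false)
  have hh : Computable₂ (fun (x : α) (p : ℕ × Bool) => p.2 && G x p.1) :=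
    h3.of_eq fun q => by cases hq : q.2.2 <;> simp [hq]
  exact (Computable.nat_rec hF (Computable.const true) hh).of_eq fun a => rfl

/-- Extract the `i`-th element of the list coded by `c`. -/
def extL (c i : ℕ) : ℕ := (Denumerable.ofNat (List ℕ) c).getD i 0

theorem extL_comp : Computable₂ extL :=
  Primrec₂.to_comp <| (Primrec.list_getD 0).comp
    ((Primrec.ofNat (List ℕ)).comp Primrec.fst) Primrec.snd

theorem extL_encode {L : ℕ} {v : ℕ → ℕ} {i : ℕ} (h : i < L) :
    extL (Encodable.encode ((List.range L).map v)) i = v i := by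
  unfold extL
  rw [Denumerable.ofNat_encode]
  rw [List.getD_eq_getElem?_getD, List.getElem?_map, List.getElem?_range h]
  rfl

/-- The searchable check: does `c` code a pattern witness for `n` w.r.t. `χ`? -/
def checkB (χ : ℕ → Bool) (n c : ℕ) : Bool :=
  NAll (fun i => NAll (fun j =>
      χ (Nat.pair (extL c i) (extL c j)) == (decide (i = j) || DstB n i j)) (LL n)) (LL n)

theorem checkB_iff {χ : ℕ → Bool} {Q : ℕ → ℕ → Prop}
    (hχ : ∀ x y, (χ (Nat.pair x y) = true ↔ Q x y)) (n c : ℕ) :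
    checkB χ n c = true ↔ GoodT Q n (extL c) := by
  unfold checkB GoodT
  rw [NAll_iff]
  apply forall_congr'
  intro i
  apply imp_congr_right
  intro _
  rw [NAll_iff]
  apply forall_congr'
  intro j
  apply imp_congr_right
  intro _
  rw [beq_iff_eq]
  have hbool : ∀ (a b : Bool), a = b ↔ ((a = true) ↔ (b = true)) := by decide
  rw [hbool]
  rw [hχ]
  rw [Bool.or_eq_true, decide_eq_true_eq]
  exact Iff.rfl

theorem rePred_of_exists {p : ℕ → Prop} {W : ℕ → ℕ → Bool} (hW : Computable₂ W)
    (h : ∀ n, p n ↔ ∃ s, W n s = true) : REPred p := by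
  have hp : Partrec fun n => Nat.rfind (fun s => (Part.some (W n s) : Part Bool)) := by
    apply Partrec.rfind
    exact Computable.partrec hW
  refine hp.dom_re.of_eq fun n => ?_
  refine Nat.rfind_dom.trans ?_
  rw [h n]
  constructor
  · rintro ⟨s, hs, -⟩
    exact ⟨s, (Part.mem_some_iff.1 hs).symm⟩
  · rintro ⟨s, hs⟩
    exact ⟨s, Part.mem_some_iff.2 hs.symm, fun _ => trivial⟩

theorem K0_iff_evaln (e : ℕ) : K0 e ↔
    ∃ s, (Nat.Partrec.Code.evaln s (Denumerable.ofNat Nat.Partrec.Code e) 17).isSome = true := by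
  unfold K0
  rw [Part.dom_iff_mem]
  constructor
  · rintro ⟨a, ha⟩
    obtain ⟨s, hs⟩ := Nat.Partrec.Code.evaln_complete.1 ha
    exact ⟨s, by rw [Option.isSome_iff_exists]; exact ⟨a, hs⟩⟩
  · rintro ⟨s, hs⟩
    obtain ⟨a, ha⟩ := Option.isSome_iff_exists.1 hs
    exact ⟨a, Nat.Partrec.Code.evaln_complete.2 ⟨s, ha⟩⟩

theorem DstB_comp {α : Type} [Primcodable α] {f g h : α → ℕ}
    (hf : Primrec f) (hg : Primrec g) (hh : Primrec h) :
    Primrec fun a => DstB (f a) (g a) (h a) := by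
  have pk : Primrec fun a => f a + 3 := Primrec.nat_add.comp hf (Primrec.const 3)
  have h1 : Primrec fun a => decide (g a < f a + 3) := (Primrec.nat_lt.comp hg pk).decide
  have h2 : Primrec fun a => decide (h a = (f a+3) + g a) :=
    (Primrec.eq.comp hh (Primrec.nat_add.comp pk hg)).decide
  have h3 : Primrec fun a => decide (h a = (f a+3) + (g a+1) % (f a+3)) :=
    (Primrec.eq.comp hh (Primrec.nat_add.comp pk
      (Primrec.nat_mod.comp (Primrec.nat_add.comp hg (Primrec.const 1)) pk))).decide
  have h4 : Primrec fun a => decide (g a = 2*(f a+3)) :=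
    (Primrec.eq.comp hg (Primrec.nat_mul.comp (Primrec.const 2) pk)).decide
  have h5 : Primrec fun a => decide (h a = f a+3) := (Primrec.eq.comp hh pk).decide
  have hor : Primrec₂ (· || · : Bool → Bool → Bool) := Primrec.dom_bool₂ _
  have hand : Primrec₂ (· && · : Bool → Bool → Bool) := Primrec.dom_bool₂ _
  exact hor.comp (hand.comp h1 (hor.comp h2 h3)) (hand.comp h4 h5)

set_option maxHeartbeats 1000000 in
theorem checkB_comp {χ : ℕ → Bool} (hχ : Computable χ) : Computable₂ (checkB χ) := by
  have hLL : Primrec LL :=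
    Primrec.nat_add.comp
      (Primrec.nat_mul.comp (Primrec.const 2) (Primrec.nat_add.comp Primrec.id (Primrec.const 3)))
      (Primrec.const 1)
  have hbeq : Primrec₂ (· == · : Bool → Bool → Bool) := Primrec.dom_bool₂ _
  have hor : Primrec₂ (· || · : Bool → Bool → Bool) := Primrec.dom_bool₂ _
  have hG' : Computable₂ fun (q : (ℕ × ℕ) × ℕ) (j : ℕ) =>
      χ (Nat.pair (extL q.1.2 q.2) (extL q.1.2 j)) == (decide (q.2 = j) || DstB q.1.1 q.2 j) := by
    have pc : Computable fun r : ((ℕ × ℕ) × ℕ) × ℕ => r.1.1.2 :=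
      Computable.snd.comp (Computable.fst.comp Computable.fst)
    have pi : Computable fun r : ((ℕ × ℕ) × ℕ) × ℕ => r.1.2 :=
      Computable.snd.comp Computable.fst
    have pj : Computable fun r : ((ℕ × ℕ) × ℕ) × ℕ => r.2 := Computable.snd
    have pi' : Primrec fun r : ((ℕ × ℕ) × ℕ) × ℕ => r.1.2 :=
      Primrec.snd.comp Primrec.fst
    have pj' : Primrec fun r : ((ℕ × ℕ) × ℕ) × ℕ => r.2 := Primrec.snd
    have pn' : Primrec fun r : ((ℕ × ℕ) × ℕ) × ℕ => r.1.1.1 :=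
      Primrec.fst.comp (Primrec.fst.comp Primrec.fst)
    have t1 : Computable fun r : ((ℕ × ℕ) × ℕ) × ℕ => extL r.1.1.2 r.1.2 :=
      extL_comp.comp pc pi
    have t2 : Computable fun r : ((ℕ × ℕ) × ℕ) × ℕ => extL r.1.1.2 r.2 :=
      extL_comp.comp pc pj
    have t3 : Computable fun r : ((ℕ × ℕ) × ℕ) × ℕ =>
        χ (Nat.pair (extL r.1.1.2 r.1.2) (extL r.1.1.2 r.2)) :=
      hχ.comp (Primrec₂.natPair.to_comp.comp t1 t2)
    have t4 : Computable fun r : ((ℕ × ℕ) × ℕ) × ℕ => decide (r.1.2 = r.2) :=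
      Primrec.eq.decide.to_comp.comp pi pj
    have t5 : Computable fun r : ((ℕ × ℕ) × ℕ) × ℕ => DstB r.1.1.1 r.1.2 r.2 :=
      (DstB_comp pn' pi' pj').to_comp
    exact hbeq.to_comp.comp t3 (hor.to_comp.comp t4 t5)
  have hG : Computable₂ fun (p : ℕ × ℕ) (i : ℕ) =>
      NAll (fun j => χ (Nat.pair (extL p.2 i) (extL p.2 j)) ==
        (decide (i = j) || DstB p.1 i j)) (LL p.1) := by
    have hF' : Computable fun q : (ℕ × ℕ) × ℕ => LL q.1.1 :=
      (hLL.comp Primrec.fst).to_comp.comp Computable.fst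
    exact computable_NAll hF' hG'
  have hF : Computable fun p : ℕ × ℕ => LL p.1 := (hLL.comp Primrec.fst).to_comp
  exact computable_NAll hF hG

theorem band_eq_false_iff_prop {p : Prop} [Decidable p] {b : Bool} :
    ((decide p && b) = false) ↔ ¬(p ∧ b = true) := by
  by_cases hp : p <;> cases b <;> simp [hp]

set_option maxHeartbeats 1000000 in
/-- The coded set of `Pord` is co-c.e. -/
theorem Pord_coCE : SetCoCE (codedSet Pord) := by
  classical
  have hnot : Primrec (! · : Bool → Bool) := Primrec.dom_bool _
  have hand : Primrec₂ (· && · : Bool → Bool → Bool) := Primrec.dom_bool₂ _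
  have hor : Primrec₂ (· || · : Bool → Bool → Bool) := Primrec.dom_bool₂ _
  have qx : Primrec fun r : ℕ × ℕ => r.1 := Primrec.fst
  have px : Primrec fun r : ℕ × ℕ => r.1.unpair.1 := Primrec.fst.comp (Primrec.unpair.comp qx)
  have py : Primrec fun r : ℕ × ℕ => r.1.unpair.2 := Primrec.snd.comp (Primrec.unpair.comp qx)
  have pxx : Primrec fun r : ℕ × ℕ => r.1.unpair.1.unpair.1 :=
    Primrec.fst.comp (Primrec.unpair.comp px)
  have pxy : Primrec fun r : ℕ × ℕ => r.1.unpair.1.unpair.2 :=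
    Primrec.snd.comp (Primrec.unpair.comp px)
  have pyx : Primrec fun r : ℕ × ℕ => r.1.unpair.2.unpair.1 :=
    Primrec.fst.comp (Primrec.unpair.comp py)
  have pyy : Primrec fun r : ℕ × ℕ => r.1.unpair.2.unpair.2 :=
    Primrec.snd.comp (Primrec.unpair.comp py)
  have e1 : Primrec fun r : ℕ × ℕ => decide (r.1.unpair.1 = r.1.unpair.2) :=
    (Primrec.eq.comp px py).decide
  have e2 : Primrec fun r : ℕ × ℕ => decide (r.1.unpair.1.unpair.1 = r.1.unpair.2.unpair.1) :=
    (Primrec.eq.comp pxx pyx).decide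
  have e3 : Primrec fun r : ℕ × ℕ =>
      DstB r.1.unpair.1.unpair.1 r.1.unpair.1.unpair.2 r.1.unpair.2.unpair.2 :=
    DstB_comp pxx pxy pyy
  have e4 : Primrec fun r : ℕ × ℕ => decide (r.1.unpair.1.unpair.2 = 2*(r.1.unpair.1.unpair.1+3)) :=
    (Primrec.eq.comp pxy (Primrec.nat_mul.comp (Primrec.const 2)
      (Primrec.nat_add.comp pxx (Primrec.const 3)))).decide
  have e5 : Primrec fun r : ℕ × ℕ =>
      (Nat.Partrec.Code.evaln r.2
        (Denumerable.ofNat Nat.Partrec.Code r.1.unpair.1.unpair.1) 17).isSome :=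
    Primrec.option_isSome.comp (Nat.Partrec.Code.primrec_evaln.comp
      (Primrec.pair (Primrec.pair Primrec.snd ((Primrec.ofNat _).comp pxx)) (Primrec.const 17)))
  have hW : Computable₂ fun (x s : ℕ) =>
      ((!(decide (x.unpair.1 = x.unpair.2))) &&
        (!((decide (x.unpair.1.unpair.1 = x.unpair.2.unpair.1)) &&
          DstB x.unpair.1.unpair.1 x.unpair.1.unpair.2 x.unpair.2.unpair.2))) ||
      (((!(decide (x.unpair.1 = x.unpair.2))) &&
        decide (x.unpair.1.unpair.2 = 2*(x.unpair.1.unpair.1+3))) &&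
        (Nat.Partrec.Code.evaln s
          (Denumerable.ofNat Nat.Partrec.Code x.unpair.1.unpair.1) 17).isSome) :=
    Primrec.to_comp
      (hor.comp (hand.comp (hnot.comp e1) (hnot.comp (hand.comp e2 e3)))
        (hand.comp (hand.comp (hnot.comp e1) e4) e5))
  refine rePred_of_exists hW ?_
  intro mm
  show ¬ Pord mm.unpair.1 mm.unpair.2 ↔ _
  constructor
  · intro hnp
    have hxy : mm.unpair.1 ≠ mm.unpair.2 := fun hc => hnp (Or.inl hc)
    by_cases hpk : mm.unpair.1.unpair.2 = 2*(mm.unpair.1.unpair.1+3) ∧ K0 mm.unpair.1.unpair.1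
    · obtain ⟨s, hs⟩ := (K0_iff_evaln _).1 hpk.2
      refine ⟨s, ?_⟩
      simp only [Bool.or_eq_true, Bool.and_eq_true, Bool.not_eq_true', decide_eq_true_eq,
        decide_eq_false_iff_not, band_eq_false_iff_prop]
      exact Or.inr ⟨⟨hxy, hpk.1⟩, hs⟩
    · refine ⟨0, ?_⟩
      simp only [Bool.or_eq_true, Bool.and_eq_true, Bool.not_eq_true', decide_eq_true_eq,
        decide_eq_false_iff_not, band_eq_false_iff_prop]
      left
      refine ⟨hxy, ?_⟩
      rintro ⟨hA, hD⟩
      exact hnp (Or.inr ⟨hA, hD, fun hp hk => hpk ⟨hp, hk⟩⟩)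
  · rintro ⟨s, hs⟩
    simp only [Bool.or_eq_true, Bool.and_eq_true, Bool.not_eq_true', decide_eq_true_eq,
      decide_eq_false_iff_not, band_eq_false_iff_prop] at hs
    rintro (hc | ⟨hA, hD, hP⟩)
    · rcases hs with ⟨hxy, -⟩ | ⟨⟨hxy, -⟩, -⟩ <;> exact hxy hc
    · rcases hs with ⟨-, hnC⟩ | ⟨⟨-, hpd⟩, hev⟩
      · exact hnC ⟨hA, hD⟩
      · exact hP hpd ((K0_iff_evaln _).2 ⟨s, hev⟩)

theorem exists_coCE_partialOrder_not_iso_computable :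
    ∃ P : ℕ → ℕ → Prop, PartialOrderRel P ∧ SetCoCE (codedSet P) ∧
      ∀ Q : ℕ → ℕ → Prop, PartialOrderRel Q → SetComputable (codedSet Q) → ¬ Isomorphic P Q := by
  refine ⟨Pord, Pord_partialOrder, Pord_coCE, ?_⟩
  rintro Q _hQ hQc ⟨f, hfb, hfi⟩
  obtain ⟨χ, hχc, hχp⟩ := ComputablePred.computable_iff.1 hQc
  have hχ : ∀ x y, (χ (Nat.pair x y) = true ↔ Q x y) := by
    intro x y
    have h1 := congrFun hχp (Nat.pair x y)
    have h2 : (Nat.pair x y ∈ codedSet Q) ↔ Q x y := by simp [codedSet]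
    rw [← h2, h1]
  have hiff : ∀ nn : ℕ, (¬ K0 nn) ↔ ∃ c, checkB χ nn c = true := by
    intro nn
    constructor
    · intro hnn
      have hg : GoodT Q nn (fun i => f (Nat.pair nn i)) := by
        intro i hi j hj
        show Q (f (Nat.pair nn i)) (f (Nat.pair nn j)) ↔ _
        rw [← hfi]
        exact good_of_not_K0 hnn i hi j hj
      refine ⟨Encodable.encode ((List.range (LL nn)).map (fun i => f (Nat.pair nn i))), ?_⟩
      rw [checkB_iff hχ]
      intro i hi j hj
      rw [extL_encode hi, extL_encode hj]
      exact hg i hi j hj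
    · rintro ⟨c, hc⟩
      have hg := (checkB_iff hχ nn c).1 hc
      have hg2 : GoodT Pord nn (fun i => (Equiv.ofBijective f hfb).symm (extL c i)) := by
        intro i hi j hj
        show Pord ((Equiv.ofBijective f hfb).symm (extL c i))
          ((Equiv.ofBijective f hfb).symm (extL c j)) ↔ _
        rw [hfi]
        rw [show f ((Equiv.ofBijective f hfb).symm (extL c i)) = extL c i from
          (Equiv.ofBijective f hfb).apply_symm_apply _]
        rw [show f ((Equiv.ofBijective f hfb).symm (extL c j)) = extL c j from
          (Equiv.ofBijective f hfb).apply_symm_apply _]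
        exact hg i hi j hj
      exact good_imp hg2
  have h1 : REPred (fun nn : ℕ => ¬ K0 nn) := rePred_of_exists (checkB_comp hχc) hiff
  exact K0_not_computable (ComputablePred.computable_iff_re_compl_re'.2 ⟨K0_re, h1⟩)

end CEOrders
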